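/- arXiv:0707.3781 — 2 statements merged into one kernel-verified Lean document; each statement's English description precedes it below -/
import Mathlib

section
/- In the translation T_RC from rational to constrained default logic, every constrained process of T_RC(⟨D,W⟩) containing the special default T_s (with no precondition and no justification and consequence ¬a ∧ ¬b ∧ E ∧ z₁ ∧ … ∧ z_m) generates the extension Cn(W[X/X'] ∧ ¬a ∧ ¬b ∧ E ∧ z₁ ∧ … ∧ z_m). -/
universe u

/-- Semantic propositional formulae over variables `V`. -/
def Form (V : Type u) : Type u := (V → Bool) → Prop

/-- Semantic entailment between formulae. -/
def Entails {V : Type u} (A C : Form V) : Prop := ∀ v, A v → C v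

/-- Satisfaction of a set of formulae by an assignment. -/
def SetSat {V : Type u} (S : Set (Form V)) (v : V → Bool) : Prop := ∀ A ∈ S, A v

/-- Entailment from a set of formulae. -/
def SetEntails {V : Type u} (S : Set (Form V)) (C : Form V) : Prop :=
  ∀ v, SetSat S v → C v

/-- Consistency of a set of formulae. -/
def Consistent {V : Type u} (S : Set (Form V)) : Prop := ∃ v, SetSat S v

/-- A formula does not depend on (does not contain) the variable `a`. -/
def IndepOf {V : Type u} [DecidableEq V] (A : Form V) (a : V) : Prop :=
  ∀ (v : V → Bool) (c : Bool), A (Function.update v a c) ↔ A v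

/-- A formula contains only variables in `X`. -/
def VarsIn {V : Type u} [DecidableEq V] (γ : Form V) (X : Set V) : Prop :=
  ∀ a ∉ X, IndepOf γ a

/-- Var-equivalence with respect to a set of variables `X`. -/
def VarEquiv {V : Type u} [DecidableEq V] (X : Set V) (α β : Form V) : Prop :=
  ∀ γ : Form V, VarsIn γ X → (Entails α γ ↔ Entails β γ)

/-- A default: precondition, justification, consequence. -/
structure Default (V : Type u) where
  prec : Form V
  just : Form V
  cons : Form V

/-- The set of consequences of the defaults in a sequence. -/
def consSet {V : Type u} (Pr : List (Default V)) : Set (Form V) :=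
  {φ | ∃ d ∈ Pr, d.cons = φ}

/-- The set of justifications of the defaults in a sequence. -/
def justSet {V : Type u} (Pr : List (Default V)) : Set (Form V) :=
  {φ | ∃ d ∈ Pr, d.just = φ}

/-- A process of the default theory `⟨D, W⟩`: a sequence of distinct defaults
from `D` with consistent consequences, each precondition entailed by the
background theory together with the consequences of the earlier defaults. -/
def IsProcess {V : Type u} (D : Set (Default V)) (W : Set (Form V))
    (Pr : List (Default V)) : Prop :=
  (∀ d ∈ Pr, d ∈ D) ∧ Pr.Nodup ∧ Consistent (W ∪ consSet Pr) ∧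
    ∀ i : Fin Pr.length, SetEntails (W ∪ consSet (Pr.take i)) (Pr.get i).prec

/-- Global success of a sequence of defaults. -/
def GlobSucc {V : Type u} (W : Set (Form V)) (Pr : List (Default V)) : Prop :=
  Consistent (W ∪ consSet Pr ∪ justSet Pr)

/-- Local success of a sequence of defaults. -/
def LocSucc {V : Type u} (W : Set (Form V)) (Pr : List (Default V)) : Prop :=
  ∀ d ∈ Pr, Consistent (W ∪ consSet Pr ∪ {d.just})

/-- A globally successful process. -/
def GlobSuccProcess {V : Type u} (D : Set (Default V)) (W : Set (Form V))
    (Pr : List (Default V)) : Prop :=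
  IsProcess D W Pr ∧ GlobSucc W Pr

/-- A locally successful process. -/
def LocSuccProcess {V : Type u} (D : Set (Default V)) (W : Set (Form V))
    (Pr : List (Default V)) : Prop :=
  IsProcess D W Pr ∧ LocSucc W Pr

/-- A constrained process: maximal globally successful process. -/
def ConstrainedProcess {V : Type u} (D : Set (Default V)) (W : Set (Form V))
    (Pr : List (Default V)) : Prop :=
  GlobSuccProcess D W Pr ∧
    ∀ d ∈ D, d ∉ Pr → ¬ GlobSuccProcess D W (Pr ++ [d])

/-- A rational process: globally successful process closed under global
applicability. -/
def RationalProcess {V : Type u} (D : Set (Default V)) (W : Set (Form V))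
    (Pr : List (Default V)) : Prop :=
  GlobSuccProcess D W Pr ∧
    ∀ d ∈ D, d ∉ Pr →
      ¬ (SetEntails (W ∪ consSet Pr) d.prec ∧
          Consistent (W ∪ consSet Pr ∪ justSet Pr ∪ {d.just}))

/-- A justified process: maximal locally successful process. -/
def JustifiedProcess {V : Type u} (D : Set (Default V)) (W : Set (Form V))
    (Pr : List (Default V)) : Prop :=
  LocSuccProcess D W Pr ∧
    ∀ d ∈ D, d ∉ Pr → ¬ LocSuccProcess D W (Pr ++ [d])

/-- A Reiter process: locally successful process closed under local
applicability. -/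
def ReiterProcess {V : Type u} (D : Set (Default V)) (W : Set (Form V))
    (Pr : List (Default V)) : Prop :=
  LocSuccProcess D W Pr ∧
    ∀ d ∈ D, d ∉ Pr →
      ¬ (SetEntails (W ∪ consSet Pr) d.prec ∧
          Consistent (W ∪ consSet Pr ∪ {d.just}))

/-- Deductive closure. -/
def Cn {V : Type u} (S : Set (Form V)) : Set (Form V) := {φ | SetEntails S φ}

/-- The extension generated by a process. -/
def ext {V : Type u} (W : Set (Form V)) (Pr : List (Default V)) : Set (Form V) :=
  Cn (W ∪ consSet Pr)

/-- The seminormal translation: conjoin each default's consequence to its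
justification. -/
def TCR {V : Type u} (d : Default V) : Default V :=
  ⟨d.prec, fun v => d.just v ∧ d.cons v, d.cons⟩

variable {X : Type u} {m : ℕ}

/-- The extended alphabet for `T_RC`: the original variables `X`, a disjoint
copy `X'` of `X`, the variables `z₁, …, z_m`, and the variables `a` and `b`. -/
abbrev VRC (X : Type u) (m : ℕ) : Type u := X ⊕ (X ⊕ (Fin m ⊕ Bool))

/-- A formula over `X` read over the extended alphabet. -/
def lift (φ : Form X) : Form (VRC X m) := fun v => φ (fun x => v (Sum.inl x))

/-- The renaming `φ[X/X']` of a formula to the copy `X'` of the alphabet. -/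
def ren (φ : Form X) : Form (VRC X m) :=
  fun v => φ (fun x => v (Sum.inr (Sum.inl x)))

/-- The variable `a`. -/
def aV : Form (VRC X m) := fun v => v (Sum.inr (Sum.inr (Sum.inr true))) = true

/-- The variable `b`. -/
def bV : Form (VRC X m) := fun v => v (Sum.inr (Sum.inr (Sum.inr false))) = true

/-- The variable `z_i`. -/
def zV (i : Fin m) : Form (VRC X m) :=
  fun v => v (Sum.inr (Sum.inr (Sum.inl i))) = true

/-- The translated default `T_e(d_i, i)`. -/
def Te (D : Fin m → Default X) (i : Fin m) : Default (VRC X m) :=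
  ⟨fun v => aV v → lift (D i).prec v,
   fun v => ren (D i).just v ∧ ren (D i).cons v,
   fun v => zV i v ∧ (aV v → lift (D i).cons v) ∧ (bV v → lift (D i).just v)⟩

/-- The translated default `T_n(d_i, i)`. -/
def Tn (D : Fin m → Default X) (i : Fin m) : Default (VRC X m) :=
  ⟨fun v => (aV v → lift (D i).prec v) ∧ (aV v ∧ bV v → ¬ lift (D i).just v),
   fun _ => True,
   fun v => zV i v⟩

/-- The special default `T_g`. -/
def Tg (D : Fin m → Default X) (E : Form X) : Default (VRC X m) :=
  ⟨fun v => ∀ i : Fin m, (aV v → lift (D i).prec v) → zV i v,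
   fun v => aV v ∧ ¬ lift E v,
   fun v => aV v ∧ ¬ bV v ∧ ∀ i : Fin m, zV i v⟩

/-- The special default `T_s`, with no precondition and no justification and
consequence `¬a ∧ ¬b ∧ E ∧ z₁ ∧ … ∧ z_m`. -/
def Ts (E : Form X) : Default (VRC X m) :=
  ⟨fun _ => True,
   fun _ => True,
   fun v => ¬ aV v ∧ ¬ bV v ∧ lift E v ∧ ∀ i : Fin m, zV i v⟩

/-- The set of defaults of the translated theory `T_RC(⟨D, W⟩)`. -/
def DRC (D : Fin m → Default X) (E : Form X) : Set (Default (VRC X m)) :=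
  Set.range (Te D) ∪ Set.range (Tn D) ∪ {Tg D E, Ts E}

/-- The background theory `(a → W) ∧ W[X/X']` of the translated theory. -/
def WRC (W : Form X) : Set (Form (VRC X m)) :=
  {fun v => (aV v → lift W v) ∧ ren W v}

/-- In the translation `T_RC` from rational to constrained default logic,
every constrained process of `T_RC(⟨D, W⟩)` containing the special default
`T_s` generates the extension
`Cn(W[X/X'] ∧ ¬a ∧ ¬b ∧ E ∧ z₁ ∧ … ∧ z_m)`. -/
theorem stmt18 (D : Fin m → Default X) (W E : Form X)
    (Pr : List (Default (VRC X m)))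
    (hPr : ConstrainedProcess (DRC D E) (WRC W) Pr)
    (hTs : Ts E ∈ Pr) :
    ext (WRC W) Pr =
      Cn ({fun v => ren W v ∧ ¬ aV v ∧ ¬ bV v ∧ lift E v ∧ ∀ i : Fin m, zV i v} :
        Set (Form (VRC X m))) := by
  obtain ⟨⟨⟨hD, _, hcons, _⟩, _⟩, _⟩ := hPr
  have key : ∀ v, SetSat (WRC W ∪ consSet Pr) v ↔
      (ren W v ∧ ¬ aV v ∧ ¬ bV v ∧ lift E v ∧ ∀ i : Fin m, zV i v) := by
    intro v
    constructor
    · intro hv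
      have hW := hv _ (Or.inl rfl)
      have hTsc := hv _ (Or.inr ⟨Ts E, hTs, rfl⟩)
      obtain ⟨hna, hnb, hE, hz⟩ := hTsc
      exact ⟨hW.2, hna, hnb, hE, hz⟩
    · rintro ⟨hW, hna, hnb, hE, hz⟩ A hA
      rcases hA with hA | ⟨d, hdPr, rfl⟩
      · simp only [WRC, Set.mem_singleton_iff] at hA
        subst hA
        exact ⟨fun ha => absurd ha hna, hW⟩
      · have hd := hD d hdPr
        simp only [DRC, Set.mem_union, Set.mem_range, Set.mem_insert_iff,
          Set.mem_singleton_iff] at hd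
        rcases hd with (⟨i, rfl⟩ | ⟨i, rfl⟩) | (rfl | rfl)
        · exact ⟨hz i, fun ha => absurd ha hna, fun hb => absurd hb hnb⟩
        · exact hz i
        · obtain ⟨v0, hv0⟩ := hcons
          have h1 := hv0 _ (Or.inr ⟨Tg D E, hdPr, rfl⟩)
          have h2 := hv0 _ (Or.inr ⟨Ts E, hTs, rfl⟩)
          exact absurd h1.1 h2.1
        · exact ⟨hna, hnb, hE, hz⟩
  ext φ
  constructor
  · intro h v hv
    exact h v ((key v).mpr (hv _ rfl))
  · intro h v hv
    exact h v fun A hA => by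
      replace hA := Set.mem_singleton_iff.mp hA; subst hA
      exact (key v).mp hv
end

section
/- In the translation T_RC from rational to constrained default logic, every constrained process of the translated theory contains at least one of the two special defaults T_s or T_g; consequently any constrained process not containing T_s contains T_g and generates an extension not var-equivalent to E. -/
universe u

variable {X : Type u} {m : ℕ}

/-- Every constrained process of the translated theory `T_RC(⟨D, W⟩)` contains
at least one of the special defaults `T_s` or `T_g`; consequently any
constrained process not containing `T_s` contains `T_g` and generates an
extension that is not var-equivalent to `E` (w.r.t. the original variables). -/
theorem stmt19 [DecidableEq X] (D : Fin m → Default X) (W E : Form X)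
    (hE : ∃ v, E v) :
    ∀ Pr : List (Default (VRC X m)),
      ConstrainedProcess (DRC D E) (WRC W) Pr →
        (Ts E ∈ Pr ∨ Tg D E ∈ Pr) ∧
        (Ts E ∉ Pr → Tg D E ∈ Pr ∧
          ¬ VarEquiv (Set.range (Sum.inl : X → VRC X m))
            (fun v => ((aV v → lift W v) ∧ ren W v) ∧ ∀ d ∈ Pr, d.cons v)
            (lift E)) := by
  intro Pr hP
  obtain ⟨⟨⟨hmem, hnd, ⟨v0, hv0⟩, hprec⟩, ⟨v, hv⟩⟩, hmax⟩ := hP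
  obtain ⟨vE, hvE⟩ := hE
  -- Step 1: Ts E ∈ Pr ∨ Tg D E ∈ Pr
  have key : Ts E ∈ Pr ∨ Tg D E ∈ Pr := by
    by_contra h
    push_neg at h
    obtain ⟨hTs, hTg⟩ := h
    refine hmax (Ts E) ?_ hTs ?_
    · exact Or.inr (Or.inr rfl)
    -- construct a witness valuation
    classical
    let v' : VRC X m → Bool := fun w => match w with
      | .inl x => vE x
      | .inr (.inl x) => v (.inr (.inl x))
      | .inr (.inr (.inl _)) => true
      | .inr (.inr (.inr _)) => false
    have hnA : ¬ aV v' := by simp [aV, v']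
    have hnB : ¬ bV v' := by simp [bV, v']
    have hZ : ∀ i : Fin m, zV i v' := by intro i; simp [zV, v']
    have hren : ∀ φ : Form X, ren φ v' ↔ ren φ v := fun φ => Iff.rfl
    have hliftE : lift E v' := hvE
    have hmain : SetSat (WRC W ∪ consSet (Pr ++ [Ts E]) ∪ justSet (Pr ++ [Ts E])) v' := by
      have hd' : ∀ d ∈ Pr, (∃ i, d = Te D i) ∨ (∃ i, d = Tn D i) := by
        intro d hd
        rcases hmem d hd with (⟨i, hi⟩ | ⟨i, hi⟩) | (h | h)
        · exact Or.inl ⟨i, hi.symm⟩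
        · exact Or.inr ⟨i, hi.symm⟩
        · exact absurd (h ▸ hd) hTg
        · exact absurd (h ▸ hd) hTs
      intro φ hφ
      rcases hφ with (hφ | ⟨d, hd, rfl⟩) | ⟨d, hd, rfl⟩
      · -- background theory
        have hφ' : φ = fun w => (aV w → lift W w) ∧ ren W w := hφ
        subst hφ'
        exact ⟨fun ha => absurd ha hnA,
          (hren W).mpr (hv _ (Or.inl (Or.inl rfl))).2⟩
      · -- consequences
        rcases List.mem_append.mp hd with hd | hd
        · rcases hd' d hd with ⟨i, rfl⟩ | ⟨i, rfl⟩
          · exact ⟨hZ i, fun ha => absurd ha hnA, fun hb => absurd hb hnB⟩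
          · exact hZ i
        · have : d = Ts E := by simpa using hd
          subst this
          exact ⟨hnA, hnB, hliftE, hZ⟩
      · -- justifications
        rcases List.mem_append.mp hd with hd | hd
        · rcases hd' d hd with ⟨i, rfl⟩ | ⟨i, rfl⟩
          · have := hv _ (Or.inr ⟨Te D i, hd, rfl⟩)
            exact ⟨((hren _).mpr this.1 : _), ((hren _).mpr this.2 : _)⟩
          · trivial
        · have : d = Ts E := by simpa using hd
          subst this
          trivial
    refine ⟨⟨?_, ?_, ⟨v', fun φ hφ => ?_⟩, ?_⟩, ⟨v', hmain⟩⟩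
    · intro d hd
      rcases List.mem_append.mp hd with hd | hd
      · exact hmem d hd
      · have : d = Ts E := by simpa using hd
        subst this
        exact Or.inr (Or.inr rfl)
    · refine List.Nodup.append hnd (List.nodup_singleton _) ?_
      intro x hx hx'
      have : x = Ts E := by simpa using hx'
      exact hTs (this ▸ hx)
    · exact hmain φ (Or.inl hφ)
    · intro i
      by_cases h : (i : ℕ) < Pr.length
      · have htake : (Pr ++ [Ts E]).take i = Pr.take i :=
          List.take_append_of_le_length (le_of_lt h)
        have hget : (Pr ++ [Ts E]).get i = Pr.get ⟨i, h⟩ := by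
          simp only [List.get_eq_getElem]
          exact List.getElem_append_left h
        rw [htake, hget]
        exact hprec ⟨i, h⟩
      · have hlen : (i : ℕ) = Pr.length := by
          have := i.isLt
          simp [List.length_append] at this
          omega
        have hget : (Pr ++ [Ts E]).get i = Ts E := by
          simp [List.get_eq_getElem, List.getElem_append_right (le_of_eq hlen.symm), hlen]
        rw [hget]
        intro w _
        trivial
  refine ⟨key, fun hTs => ?_⟩
  have hTg : Tg D E ∈ Pr := key.resolve_left hTs
  refine ⟨hTg, fun hVE => ?_⟩
  have hγ : VarsIn (lift E) (Set.range (Sum.inl : X → VRC X m)) := by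
    intro a ha vv c
    have : ∀ x : X, Function.update vv a c (Sum.inl x) = vv (Sum.inl x) := by
      intro x
      apply Function.update_of_ne
      intro hx; exact ha ⟨x, hx⟩
    constructor <;> intro h <;> · unfold lift at *; simpa [this] using h
  have hEnt := (hVE (lift E) hγ).mpr (fun w hw => hw)
  -- v satisfies α but not lift E
  have hW : ((aV v → lift W v) ∧ ren W v) := hv _ (Or.inl (Or.inl rfl))
  have hcons : ∀ d ∈ Pr, d.cons v := fun d hd => hv _ (Or.inl (Or.inr ⟨d, hd, rfl⟩))
  have hjust : (Tg D E).just v := hv _ (Or.inr ⟨Tg D E, hTg, rfl⟩)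
  exact hjust.2 (hEnt v ⟨hW, hcons⟩)
end
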